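/- arXiv:1911.03775 — 3 statements merged into one kernel-verified Lean document; each statement's English description precedes it below -/
import Mathlib

section
/- Let d ≥ 1 and p_1, …, p_d ∈ (0,1), and set μ = p_1 + ⋯ + p_d. In anisotropic oriented Bernoulli percolation on ℤ^d, for every n ≥ 1 the second moments of W_n = X_n/μ^n satisfy the recursion 𝔼[W_{n+1}²] = 𝔼[W_n²] + (σ²/μ²)·a_n, where σ² = ∑_{i=1}^d p_i(1−p_i) is the variance of the number of open oriented edges leaving a fixed vertex. Consequently 𝔼[W_{n+1}²] = 𝔼[W_1²] + (σ²/μ²) ∑_{j=1}^n a_j. -/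
open MeasureTheory ProbabilityTheory

/-- The `i`-th standard basis vector of `ℤ^d`. -/
def stdBasis (d : ℕ) (i : Fin d) : Fin d → ℤ := fun j => if j = i then 1 else 0

/-- A percolation configuration: each oriented edge `⟨x, x + e i⟩`, encoded as the pair
`(x, i)`, is either open (`true`) or closed (`false`). -/
abbrev Config (d : ℕ) := ((Fin d → ℤ) × Fin d) → Bool

/-- The position after `j` steps of the oriented path starting at the origin whose
sequence of step directions is `γ`. -/
def pathPos (d : ℕ) {n : ℕ} (γ : Fin n → Fin d) (j : ℕ) : Fin d → ℤ :=
  ∑ t ∈ Finset.univ.filter (fun t : Fin n => (t : ℕ) < j), stdBasis d (γ t)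

/-- The oriented path with step directions `γ` starting at the origin is open in the
configuration `ω`: each of its oriented edges is open. -/
def pathOpen (d : ℕ) {n : ℕ} (ω : Config d) (γ : Fin n → Fin d) : Prop :=
  ∀ j : Fin n, ω (pathPos d γ (j : ℕ), γ j) = true

/-- The open cluster of the origin: all vertices reachable from `0` by an open oriented path. -/
def cluster (d : ℕ) (ω : Config d) : Set (Fin d → ℤ) :=
  {x | ∃ (n : ℕ) (γ : Fin n → Fin d), pathOpen d ω γ ∧ pathPos d γ n = x}

/-- The set of oriented edges used by an oriented path with step directions `γ`. -/
noncomputable def pathEdges (d : ℕ) {n : ℕ} (γ : Fin n → Fin d) :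
    Finset ((Fin d → ℤ) × Fin d) :=
  Finset.image (fun j : Fin n => (pathPos d γ (j : ℕ), γ j)) Finset.univ

/-- `ℙ(γ₁, γ₂ open)`: the product, over the distinct oriented edges used by `γ₁` or `γ₂`,
of the probability `p i` of each edge (an edge in direction `e i` contributes `p i`). -/
noncomputable def pairProb (d : ℕ) (p : Fin d → ℝ) {n : ℕ} (γ₁ γ₂ : Fin n → Fin d) : ℝ :=
  ∏ e ∈ pathEdges d γ₁ ∪ pathEdges d γ₂, p e.2

/-- `a n = μ^{-2n} ∑_{(γ₁,γ₂) ∈ 𝒞_n², f(γ₁)=f(γ₂)} ℙ(γ₁, γ₂ open)`. -/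
noncomputable def aSeq (d : ℕ) (p : Fin d → ℝ) (n : ℕ) : ℝ :=
  (∑ gg ∈ Finset.univ.filter
      (fun gg : (Fin n → Fin d) × (Fin n → Fin d) => pathPos d gg.1 n = pathPos d gg.2 n),
    pairProb d p gg.1 gg.2) / (∑ i, p i) ^ (2 * n)

open Classical in
/-- `b m = μ^{-2m} ∑_{(γ₁,γ₂) ∈ A_m} ℙ(γ₁, γ₂ open)`, where `A_m` is the set of pairs of
paths of length `m` whose intermediate vertices are everywhere distinct and whose final
vertices coincide. -/
noncomputable def bSeq (d : ℕ) (p : Fin d → ℝ) (m : ℕ) : ℝ :=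
  (∑ gg ∈ Finset.univ.filter
      (fun gg : (Fin m → Fin d) × (Fin m → Fin d) =>
        (∀ i ∈ Finset.Ioo 0 m, pathPos d gg.1 i ≠ pathPos d gg.2 i) ∧
          pathPos d gg.1 m = pathPos d gg.2 m),
    pairProb d p gg.1 gg.2) / (∑ i, p i) ^ (2 * m)

/-- `Xcount d n ω` is the number of open oriented paths of length `n` starting at the
origin in the configuration `ω`. -/
noncomputable def Xcount (d n : ℕ) (ω : Config d) : ℕ :=
  Nat.card {γ : Fin n → Fin d // pathOpen d ω γ}

open Finset

lemma card_filter_lt {n : ℕ} (j : ℕ) (hj : j ≤ n) :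
    (Finset.univ.filter (fun t : Fin n => (t : ℕ) < j)).card = j := by
  rw [← Fintype.card_subtype]
  refine (Fintype.card_congr ⟨fun t => (⟨t.1.1, t.2⟩ : Fin j),
    fun k => ⟨⟨k.1, lt_of_lt_of_le k.2 hj⟩, k.2⟩, fun t => by ext; rfl, fun k => by ext; rfl⟩).trans
    (Fintype.card_fin j)

lemma pathPos_level (d : ℕ) {n : ℕ} (γ : Fin n → Fin d) (j : ℕ) (hj : j ≤ n) :
    ∑ k, pathPos d γ j k = j := by
  unfold pathPos
  simp only [Finset.sum_apply]
  rw [Finset.sum_comm]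
  have h1 : ∀ t : Fin n, ∑ k, stdBasis d (γ t) k = 1 := by
    intro t; simp [stdBasis]
  rw [Finset.sum_congr rfl fun t _ => h1 t, Finset.sum_const, nsmul_eq_mul, mul_one,
    card_filter_lt j hj]

lemma pathPos_eq_ite (d : ℕ) {n : ℕ} (γ : Fin n → Fin d) (j : ℕ) :
    pathPos d γ j = ∑ t : Fin n, if (t : ℕ) < j then stdBasis d (γ t) else 0 := by
  rw [pathPos, Finset.sum_filter]

lemma pathPos_snoc (d : ℕ) {n : ℕ} (γ : Fin n → Fin d) (i : Fin d) (j : ℕ) (hj : j ≤ n) :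
    pathPos d (Fin.snoc γ i) j = pathPos d γ j := by
  rw [pathPos_eq_ite, pathPos_eq_ite, Fin.sum_univ_castSucc]
  simp only [Fin.snoc_castSucc, Fin.coe_castSucc, Fin.val_last]
  rw [if_neg (by omega), add_zero]

lemma pathPos_snoc_top (d : ℕ) {n : ℕ} (γ : Fin n → Fin d) (i : Fin d) :
    pathPos d (Fin.snoc γ i) (n + 1) = pathPos d γ n + stdBasis d i := by
  rw [pathPos_eq_ite, pathPos_eq_ite, Fin.sum_univ_castSucc]
  simp only [Fin.snoc_castSucc, Fin.coe_castSucc, Fin.val_last]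
  rw [if_pos (by omega), Fin.snoc_last]
  congr 1
  refine Finset.sum_congr rfl fun t _ => ?_
  rw [if_pos (by omega), if_pos t.2]

lemma pathEdges_snoc (d : ℕ) {n : ℕ} (γ : Fin n → Fin d) (i : Fin d) :
    pathEdges d (Fin.snoc γ i) = pathEdges d γ ∪ {(pathPos d γ n, i)} := by
  classical
  ext e
  simp only [pathEdges, Finset.mem_image, Finset.mem_union, Finset.mem_singleton,
    Finset.mem_univ, true_and]
  constructor
  · rintro ⟨j, rfl⟩
    refine Fin.lastCases ?_ ?_ j
    · right
      simp [Fin.snoc_last, pathPos_snoc d γ i n le_rfl]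
    · intro k
      left
      exact ⟨k, by simp [Fin.snoc_castSucc, pathPos_snoc d γ i k.1 k.2.le]⟩
  · rintro (⟨j, rfl⟩ | rfl)
    · exact ⟨j.castSucc, by simp [Fin.snoc_castSucc, pathPos_snoc d γ i j.1 j.2.le]⟩
    · exact ⟨Fin.last n, by simp [Fin.snoc_last, pathPos_snoc d γ i n le_rfl]⟩

lemma newEdge_not_mem (d : ℕ) {n : ℕ} (γ γ' : Fin n → Fin d) (i : Fin d) :
    (pathPos d γ n, i) ∉ pathEdges d γ' := by
  simp only [pathEdges, Finset.mem_image, Finset.mem_univ, true_and, not_exists]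
  rintro j h
  have h1 : pathPos d γ' j.1 = pathPos d γ n := congrArg Prod.fst h
  have := pathPos_level d γ' j.1 j.2.le
  rw [h1, pathPos_level d γ n le_rfl] at this
  exact absurd (Nat.cast_injective this) j.2.ne'

lemma pairProb_nonneg (d : ℕ) (p : Fin d → ℝ) (hp : ∀ i, 0 ≤ p i) {n : ℕ}
    (γ₁ γ₂ : Fin n → Fin d) : 0 ≤ pairProb d p γ₁ γ₂ :=
  Finset.prod_nonneg fun e _ => hp e.2

lemma pairProb_snoc (d : ℕ) (p : Fin d → ℝ) {n : ℕ} (γ₁ γ₂ : Fin n → Fin d)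
    (i₁ i₂ : Fin d) :
    pairProb d p (Fin.snoc γ₁ i₁) (Fin.snoc γ₂ i₂)
      = pairProb d p γ₁ γ₂ *
        (if (pathPos d γ₁ n, i₁) = (pathPos d γ₂ n, i₂) then p i₁ else p i₁ * p i₂) := by
  classical
  unfold pairProb
  rw [pathEdges_snoc, pathEdges_snoc]
  have hre : (pathEdges d γ₁ ∪ {(pathPos d γ₁ n, i₁)}) ∪
      (pathEdges d γ₂ ∪ {(pathPos d γ₂ n, i₂)})
      = (pathEdges d γ₁ ∪ pathEdges d γ₂) ∪
        ({(pathPos d γ₁ n, i₁)} ∪ {(pathPos d γ₂ n, i₂)}) := by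
    ext e; simp only [Finset.mem_union, Finset.mem_singleton]; tauto
  rw [hre, Finset.prod_union]
  · congr 1
    by_cases h : (pathPos d γ₁ n, i₁) = (pathPos d γ₂ n, i₂)
    · rw [if_pos h, ← h, Finset.union_idempotent, Finset.prod_singleton]
    · rw [if_neg h, Finset.prod_union (Finset.disjoint_singleton.2 h), Finset.prod_singleton,
        Finset.prod_singleton]
  · rw [Finset.disjoint_union_left, Finset.disjoint_union_right,
      Finset.disjoint_union_right]
    exact ⟨⟨Finset.disjoint_singleton_right.2 (newEdge_not_mem d γ₁ γ₁ i₁),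
      Finset.disjoint_singleton_right.2 (newEdge_not_mem d γ₂ γ₁ i₂)⟩,
      Finset.disjoint_singleton_right.2 (newEdge_not_mem d γ₁ γ₂ i₁),
      Finset.disjoint_singleton_right.2 (newEdge_not_mem d γ₂ γ₂ i₂)⟩

noncomputable def Spair (d : ℕ) (p : Fin d → ℝ) (n : ℕ) : ℝ :=
  ∑ gg : (Fin n → Fin d) × (Fin n → Fin d), pairProb d p gg.1 gg.2

open Classical in
noncomputable def Tpair (d : ℕ) (p : Fin d → ℝ) (n : ℕ) : ℝ :=
  ∑ gg ∈ Finset.univ.filter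
      (fun gg : (Fin n → Fin d) × (Fin n → Fin d) => pathPos d gg.1 n = pathPos d gg.2 n),
    pairProb d p gg.1 gg.2

def snocEquiv (d n : ℕ) : ((Fin n → Fin d) × Fin d) ≃ (Fin (n + 1) → Fin d) where
  toFun q := Fin.snoc q.1 q.2
  invFun γ := (Fin.init γ, γ (Fin.last n))
  left_inv q := by simp [Fin.init_snoc]
  right_inv γ := by simp [Fin.snoc_init_self]

lemma inner_sum_ne (d : ℕ) (p : Fin d → ℝ) (x₁ x₂ : Fin d → ℤ) (hx : x₁ ≠ x₂) :
    ∑ i₁ : Fin d, ∑ i₂ : Fin d,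
        (if ((x₁, i₁) : (Fin d → ℤ) × Fin d) = (x₂, i₂) then p i₁ else p i₁ * p i₂)
      = (∑ i, p i) ^ 2 := by
  rw [sq, Finset.sum_mul_sum]
  refine Finset.sum_congr rfl fun i₁ _ => Finset.sum_congr rfl fun i₂ _ => ?_
  rw [if_neg (by simp [Prod.ext_iff, hx])]

lemma inner_sum_eq (d : ℕ) (p : Fin d → ℝ) (x : Fin d → ℤ) :
    ∑ i₁ : Fin d, ∑ i₂ : Fin d,
        (if ((x, i₁) : (Fin d → ℤ) × Fin d) = (x, i₂) then p i₁ else p i₁ * p i₂)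
      = (∑ i, p i) ^ 2 + ∑ i, p i * (1 - p i) := by
  have h : ∀ i₁ i₂ : Fin d,
      (if ((x, i₁) : (Fin d → ℤ) × Fin d) = (x, i₂) then p i₁ else p i₁ * p i₂)
        = p i₁ * p i₂ + (if i₁ = i₂ then p i₁ * (1 - p i₂) else 0) := by
    intro i₁ i₂
    by_cases h : i₁ = i₂
    · subst h; simp [Prod.ext_iff]; ring
    · simp [Prod.ext_iff, h]
  simp only [h, Finset.sum_add_distrib]
  congr 1
  · rw [sq, Finset.sum_mul_sum]
  · refine Finset.sum_congr rfl fun i₁ _ => ?_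
    rw [Finset.sum_ite_eq (Finset.univ) i₁ (fun i₂ => p i₁ * (1 - p i₂))]
    simp

open Classical in
lemma Spair_succ (d : ℕ) (p : Fin d → ℝ) (n : ℕ) :
    Spair d p (n + 1) = (∑ i, p i) ^ 2 * Spair d p n
      + (∑ i, p i * (1 - p i)) * Tpair d p n := by
  classical
  have key : Spair d p (n + 1)
      = ∑ gg : (Fin n → Fin d) × (Fin n → Fin d), (pairProb d p gg.1 gg.2 *
          ((∑ i, p i) ^ 2 +
            if pathPos d gg.1 n = pathPos d gg.2 n then ∑ i, p i * (1 - p i) else 0)) := by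
    have e1 : Spair d p (n + 1)
        = ∑ qq : ((Fin n → Fin d) × Fin d) × ((Fin n → Fin d) × Fin d),
            pairProb d p (Fin.snoc qq.1.1 qq.1.2) (Fin.snoc qq.2.1 qq.2.2) :=
      (Fintype.sum_equiv ((snocEquiv d n).prodCongr (snocEquiv d n)) _
        (fun gg => pairProb d p gg.1 gg.2) (fun _ => rfl)).symm
    rw [e1]
    simp only [Fintype.sum_prod_type]
    refine Finset.sum_congr rfl fun γ₁ _ => ?_
    rw [Finset.sum_comm]
    refine Finset.sum_congr rfl fun γ₂ _ => ?_
    simp only [pairProb_snoc, ← Finset.mul_sum]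
    congr 1
    by_cases h : pathPos d γ₁ n = pathPos d γ₂ n
    · rw [if_pos h, ← inner_sum_eq d p (pathPos d γ₁ n), h]
    · rw [if_neg h, add_zero, inner_sum_ne d p _ _ h]
  rw [key]
  simp only [mul_add, Finset.sum_add_distrib, Finset.mul_sum]
  congr 1
  · rw [Spair, Finset.mul_sum]
    exact Finset.sum_congr rfl fun gg _ => mul_comm _ _
  · rw [Tpair, Finset.mul_sum, Finset.sum_filter]
    refine Finset.sum_congr rfl fun gg _ => ?_
    by_cases h : pathPos d gg.1 n = pathPos d gg.2 n <;> simp [h, mul_comm]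

lemma openEvent_eq (d : ℕ) {n : ℕ} (γ₁ γ₂ : Fin n → Fin d) :
    {ω : Config d | pathOpen d ω γ₁ ∧ pathOpen d ω γ₂}
      = ⋂ e ∈ (pathEdges d γ₁ ∪ pathEdges d γ₂ : Finset _),
          (fun ω : Config d => ω e) ⁻¹' {true} := by
  ext ω
  simp only [Set.mem_setOf_eq, Set.mem_iInter, Set.mem_preimage, Set.mem_singleton_iff,
    Finset.mem_union, pathEdges, Finset.mem_image, Finset.mem_univ, true_and, pathOpen]
  constructor
  · rintro ⟨h₁, h₂⟩ e (⟨j, rfl⟩ | ⟨j, rfl⟩)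
    · exact h₁ j
    · exact h₂ j
  · intro h
    exact ⟨fun j => h _ (Or.inl ⟨j, rfl⟩), fun j => h _ (Or.inr ⟨j, rfl⟩)⟩

lemma openEvent_measurable (d : ℕ) {n : ℕ} (γ₁ γ₂ : Fin n → Fin d) :
    MeasurableSet {ω : Config d | pathOpen d ω γ₁ ∧ pathOpen d ω γ₂} := by
  rw [openEvent_eq]
  exact (pathEdges d γ₁ ∪ pathEdges d γ₂).measurableSet_biInter
    fun e _ => (measurable_pi_apply e) (MeasurableSet.singleton true)

lemma openEvent_prob (d : ℕ) (p : Fin d → ℝ) (hp : ∀ i, p i ∈ Set.Ioo (0:ℝ) 1)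
    (P : Measure (Config d)) [IsProbabilityMeasure P]
    (hindep : iIndepFun (fun e (ω : Config d) => ω e) P)
    (hmarg : ∀ e : (Fin d → ℤ) × Fin d, P {ω : Config d | ω e = true} = ENNReal.ofReal (p e.2))
    {n : ℕ} (γ₁ γ₂ : Fin n → Fin d) :
    P {ω : Config d | pathOpen d ω γ₁ ∧ pathOpen d ω γ₂}
      = ENNReal.ofReal (pairProb d p γ₁ γ₂) := by
  rw [openEvent_eq]
  rw [hindep.measure_inter_preimage_eq_mul (pathEdges d γ₁ ∪ pathEdges d γ₂)
    (sets := fun _ => ({true} : Set Bool)) (fun _ _ => MeasurableSet.singleton true)]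
  rw [pairProb, ENNReal.ofReal_prod_of_nonneg (fun e _ => (hp e.2).1.le)]
  refine Finset.prod_congr rfl fun e _ => ?_
  rw [← hmarg e]
  rfl

open Classical in
lemma Xcount_eq_sum (d n : ℕ) (ω : Config d) :
    (Xcount d n ω : ℝ) = ∑ γ : Fin n → Fin d, if pathOpen d ω γ then (1:ℝ) else 0 := by
  rw [Xcount, Nat.card_eq_fintype_card, Fintype.card_subtype, Finset.card_filter]
  push_cast
  rfl

open Classical in
lemma integral_Xcount_sq (d : ℕ) (p : Fin d → ℝ) (hp : ∀ i, p i ∈ Set.Ioo (0:ℝ) 1)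
    (P : Measure (Config d)) [IsProbabilityMeasure P]
    (hindep : iIndepFun (fun e (ω : Config d) => ω e) P)
    (hmarg : ∀ e : (Fin d → ℤ) × Fin d, P {ω : Config d | ω e = true} = ENNReal.ofReal (p e.2))
    (n : ℕ) :
    ∫ ω, ((Xcount d n ω : ℝ)) ^ 2 ∂P = Spair d p n := by
  have hsq : ∀ ω : Config d, ((Xcount d n ω : ℝ)) ^ 2
      = ∑ gg : (Fin n → Fin d) × (Fin n → Fin d),
          Set.indicator {ω' : Config d | pathOpen d ω' gg.1 ∧ pathOpen d ω' gg.2}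
            (fun _ => (1:ℝ)) ω := by
    intro ω
    rw [Xcount_eq_sum, sq, Finset.sum_mul_sum, ← Fintype.sum_prod_type']
    refine Finset.sum_congr rfl fun gg _ => ?_
    rw [Set.indicator_apply]
    by_cases h₁ : pathOpen d ω gg.1 <;> by_cases h₂ : pathOpen d ω gg.2 <;>
      simp [h₁, h₂]
  simp only [hsq]
  rw [MeasureTheory.integral_finset_sum _ (fun gg _ =>
    (MeasureTheory.integrable_const (1:ℝ)).indicator (openEvent_measurable d gg.1 gg.2))]
  rw [Spair]
  refine Finset.sum_congr rfl fun gg _ => ?_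
  rw [show (fun _ : Config d => (1:ℝ)) = (1 : Config d → ℝ) from rfl,
    MeasureTheory.integral_indicator_one (openEvent_measurable d gg.1 gg.2),
    MeasureTheory.measureReal_def,
    openEvent_prob d p hp P hindep hmarg gg.1 gg.2,
    ENNReal.toReal_ofReal (pairProb_nonneg d p (fun i => (hp i).1.le) gg.1 gg.2)]

lemma aSeq_eq_Tpair (d : ℕ) (p : Fin d → ℝ) (n : ℕ) :
    aSeq d p n = Tpair d p n / (∑ i, p i) ^ (2 * n) := by
  rw [aSeq, Tpair]

theorem second_moment_recursion
    (d : ℕ) (hd : 1 ≤ d)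
    (p : Fin d → ℝ) (hp : ∀ i, p i ∈ Set.Ioo (0 : ℝ) 1)
    (μ : ℝ) (hμ : μ = ∑ i, p i)
    (σ2 : ℝ) (hσ2 : σ2 = ∑ i, p i * (1 - p i))
    (P : Measure (Config d)) [IsProbabilityMeasure P]
    (hindep : iIndepFun (fun e (ω : Config d) => ω e) P)
    (hmarg : ∀ e : (Fin d → ℤ) × Fin d, P {ω : Config d | ω e = true} = ENNReal.ofReal (p e.2))
    (W : ℕ → Config d → ℝ) (hW : ∀ n ω, W n ω = (Xcount d n ω : ℝ) / μ ^ n) :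
    (∀ n : ℕ, 1 ≤ n →
        ∫ ω, (W (n + 1) ω) ^ 2 ∂P = ∫ ω, (W n ω) ^ 2 ∂P + σ2 / μ ^ 2 * aSeq d p n) ∧
      ∀ n : ℕ, 1 ≤ n →
        ∫ ω, (W (n + 1) ω) ^ 2 ∂P
          = ∫ ω, (W 1 ω) ^ 2 ∂P + σ2 / μ ^ 2 * ∑ j ∈ Finset.Icc 1 n, aSeq d p j := by
  have hne : Nonempty (Fin d) := Fin.pos_iff_nonempty.mp hd
  have hμpos : 0 < μ := by
    rw [hμ]; exact Finset.sum_pos (fun i _ => (hp i).1) Finset.univ_nonempty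
  have hμne : μ ≠ 0 := hμpos.ne'
  have hint : ∀ n : ℕ, ∫ ω, (W n ω) ^ 2 ∂P = Spair d p n / μ ^ (2 * n) := by
    intro n
    simp only [hW, div_pow]
    rw [MeasureTheory.integral_div, integral_Xcount_sq d p hp P hindep hmarg, ← pow_mul,
      mul_comm n 2]
  have key : ∀ n : ℕ,
      ∫ ω, (W (n + 1) ω) ^ 2 ∂P = ∫ ω, (W n ω) ^ 2 ∂P + σ2 / μ ^ 2 * aSeq d p n := by
    intro n
    rw [hint, hint, aSeq_eq_Tpair, Spair_succ, ← hμ, ← hσ2]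
    have h2 : μ ^ (2 * (n + 1)) = μ ^ (2 * n) * μ ^ 2 := by ring
    rw [h2]
    field_simp
  refine ⟨fun n _ => key n, fun n hn => ?_⟩
  induction n with
  | zero => omega
  | succ m ih =>
    rcases Nat.eq_or_lt_of_le hn with h | h
    · have hm0 : m = 0 := by omega
      subst hm0
      rw [key 1]
      simp
    · have hm : 1 ≤ m := by omega
      rw [key (m + 1), ih hm, Finset.sum_Icc_succ_top (by omega : 1 ≤ m + 1)]
      ring
end

section
/- Let d ≥ 1 and p_1, …, p_d ∈ (0,1), and set μ = p_1 + ⋯ + p_d. Then, as an identity in [0, ∞], ∑_{n=1}^∞ a_n = ∑_{j=1}^∞ (∑_{m=1}^∞ b_m)^j. -/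
open MeasureTheory ProbabilityTheory

namespace ORTest
open Finset
open scoped ENNReal NNReal

variable {d : ℕ}

lemma pathPos_zero (d : ℕ) {n : ℕ} (γ : Fin n → Fin d) : pathPos d γ 0 = 0 := by
  simp [pathPos]

lemma pathPos_saturate (d : ℕ) {n : ℕ} (γ : Fin n → Fin d) {j : ℕ} (hj : n ≤ j) :
    pathPos d γ j = pathPos d γ n := by
  unfold pathPos
  congr 1
  ext t
  simp only [mem_filter, mem_univ, true_and]
  have := t.isLt
  omega

def csum {d : ℕ} (x : Fin d → ℤ) : ℤ := ∑ i, x i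

lemma csum_add (x y : Fin d → ℤ) : csum (x + y) = csum x + csum y := by
  simp [csum, Finset.sum_add_distrib]

lemma csum_pathPos {n : ℕ} (γ : Fin n → Fin d) (j : ℕ) :
    csum (pathPos d γ j) = ((min j n : ℕ) : ℤ) := by
  unfold csum pathPos
  simp only [Finset.sum_apply]
  rw [Finset.sum_comm]
  have h1 : ∀ t : Fin n, ∑ i : Fin d, stdBasis d (γ t) i = 1 := by
    intro t
    simp [stdBasis]
  rw [Finset.sum_congr rfl (fun t _ => h1 t)]
  rw [Finset.sum_const, nsmul_eq_mul, mul_one]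
  have : (filter (fun t : Fin n => (t : ℕ) < j) univ).card
      = ∑ t : Fin n, if (t : ℕ) < j then 1 else 0 := by
    rw [Finset.card_filter]
  rw [this, Fin.sum_univ_eq_sum_range (fun t => if t < j then 1 else 0) n]
  have : ∀ N, ∑ t ∈ Finset.range N, (if t < j then 1 else 0) = min j N := by
    intro N
    induction N with
    | zero => simp
    | succ N ih => rw [Finset.sum_range_succ, ih]; split <;> omega
  rw [this]


lemma pathPos_append {m k : ℕ} (a : Fin m → Fin d) (b : Fin k → Fin d) (j : ℕ) :
    pathPos d (Fin.append a b) j = pathPos d a j + pathPos d b (j - m) := by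
  unfold pathPos
  rw [Finset.sum_filter, Finset.sum_filter, Finset.sum_filter, Fin.sum_univ_add]
  congr 1
  · refine Finset.sum_congr rfl fun t _ => ?_
    rw [Fin.append_left]
    simp
  · refine Finset.sum_congr rfl fun t _ => ?_
    rw [Fin.append_right]
    simp only [Fin.coe_natAdd]
    refine if_congr ?_ rfl rfl
    omega

lemma csum_mem_pathEdges {n : ℕ} {γ : Fin n → Fin d} {e : (Fin d → ℤ) × Fin d}
    (he : e ∈ pathEdges d γ) : 0 ≤ csum e.1 ∧ csum e.1 < (n : ℤ) := by
  simp only [pathEdges, Finset.mem_image, Finset.mem_univ, true_and] at he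
  obtain ⟨j, rfl⟩ := he
  have hj := j.isLt
  rw [csum_pathPos]
  refine ⟨by positivity, ?_⟩
  have : min (j : ℕ) n = (j : ℕ) := by omega
  rw [this]
  exact_mod_cast hj

lemma pathEdges_append {m k : ℕ} (a : Fin m → Fin d) (b : Fin k → Fin d) :
    pathEdges d (Fin.append a b)
      = pathEdges d a ∪ (pathEdges d b).image (fun e => (pathPos d a m + e.1, e.2)) := by
  ext e
  simp only [pathEdges, Finset.mem_union, Finset.mem_image, Finset.mem_univ, true_and]
  constructor
  · rintro ⟨j, rfl⟩
    by_cases hj : (j : ℕ) < m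
    · left
      refine ⟨⟨(j : ℕ), hj⟩, ?_⟩
      have h1 : Fin.append a b j = a ⟨(j : ℕ), hj⟩ := by
        have h := Fin.append_left a b ⟨(j : ℕ), hj⟩
        rwa [show Fin.castAdd k ⟨(j : ℕ), hj⟩ = j from by ext; rfl] at h
      have h2 : pathPos d (Fin.append a b) (j : ℕ) = pathPos d a (j : ℕ) := by
        rw [pathPos_append]
        have : (j : ℕ) - m = 0 := by omega
        rw [this, pathPos_zero, add_zero]
      rw [h2, h1]
    · right
      have hj2 : (j : ℕ) - m < k := by have := j.isLt; omega
      refine ⟨(pathPos d b ((j : ℕ) - m), b ⟨(j : ℕ) - m, hj2⟩), ⟨⟨(j : ℕ) - m, hj2⟩, rfl⟩, ?_⟩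
      have h1 : Fin.append a b j = b ⟨(j : ℕ) - m, hj2⟩ := by
        have h := Fin.append_right a b ⟨(j : ℕ) - m, hj2⟩
        rwa [show Fin.natAdd m ⟨(j : ℕ) - m, hj2⟩ = j from by
          ext; simp only [Fin.coe_natAdd]; omega] at h
      have h2 : pathPos d (Fin.append a b) (j : ℕ)
          = pathPos d a m + pathPos d b ((j : ℕ) - m) := by
        rw [pathPos_append, pathPos_saturate d a (le_of_not_gt hj)]
      rw [h2, h1]
  · rintro (⟨j, rfl⟩ | ⟨e', ⟨j, rfl⟩, rfl⟩)
    · refine ⟨Fin.castAdd k j, ?_⟩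
      have h2 : pathPos d (Fin.append a b) ((Fin.castAdd k j : Fin (m + k)) : ℕ)
          = pathPos d a (j : ℕ) := by
        rw [Fin.coe_castAdd, pathPos_append]
        have : (j : ℕ) - m = 0 := by have := j.isLt; omega
        rw [this, pathPos_zero, add_zero]
      rw [h2, Fin.append_left]
    · refine ⟨Fin.natAdd m j, ?_⟩
      have h2 : pathPos d (Fin.append a b) ((Fin.natAdd m j : Fin (m + k)) : ℕ)
          = pathPos d a m + pathPos d b (j : ℕ) := by
        rw [Fin.coe_natAdd, pathPos_append, pathPos_saturate d a (Nat.le_add_right m j),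
          Nat.add_sub_cancel_left]
      rw [h2, Fin.append_right]

lemma pairProb_append (p : Fin d → ℝ) {m k : ℕ} (a₁ a₂ : Fin m → Fin d)
    (b₁ b₂ : Fin k → Fin d) (hmeet : pathPos d a₁ m = pathPos d a₂ m) :
    pairProb d p (Fin.append a₁ b₁) (Fin.append a₂ b₂)
      = pairProb d p a₁ a₂ * pairProb d p b₁ b₂ := by
  unfold pairProb
  rw [pathEdges_append, pathEdges_append, ← hmeet]
  set z := pathPos d a₁ m with hz
  set τ := fun e : (Fin d → ℤ) × Fin d => (z + e.1, e.2) with hτ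
  have hU : (pathEdges d a₁ ∪ (pathEdges d b₁).image τ)
        ∪ (pathEdges d a₂ ∪ (pathEdges d b₂).image τ)
      = (pathEdges d a₁ ∪ pathEdges d a₂)
        ∪ ((pathEdges d b₁ ∪ pathEdges d b₂)).image τ := by
    rw [Finset.image_union]
    ext e
    simp only [Finset.mem_union]
    tauto
  have hcz : csum z = (m : ℤ) := by
    rw [hz, csum_pathPos]; simp
  have hdisj : Disjoint (pathEdges d a₁ ∪ pathEdges d a₂)
      ((pathEdges d b₁ ∪ pathEdges d b₂).image τ) := by
    rw [Finset.disjoint_left]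
    rintro e he hti
    have h1 : csum e.1 < (m : ℤ) := by
      rcases Finset.mem_union.1 he with h | h
      · exact (csum_mem_pathEdges h).2
      · exact (csum_mem_pathEdges h).2
    simp only [Finset.mem_image] at hti
    obtain ⟨e', he', rfl⟩ := hti
    have h2 : (0 : ℤ) ≤ csum e'.1 := by
      rcases Finset.mem_union.1 he' with h | h
      · exact (csum_mem_pathEdges h).1
      · exact (csum_mem_pathEdges h).1
    have : csum (τ e').1 = csum z + csum e'.1 := by
      simp [hτ, csum_add]
    omega
  have hinj : ∀ x ∈ pathEdges d b₁ ∪ pathEdges d b₂,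
      ∀ y ∈ pathEdges d b₁ ∪ pathEdges d b₂, τ x = τ y → x = y := by
    intro x _ y _ hxy
    simp only [hτ, Prod.mk.injEq] at hxy
    exact Prod.ext (add_left_cancel hxy.1) hxy.2
  rw [hU, Finset.prod_union hdisj, Finset.prod_image hinj]


noncomputable def alphaF (d : ℕ) (p : Fin d → ℝ) (n : ℕ) : ℝ :=
  ∑ gg ∈ Finset.univ.filter
      (fun gg : (Fin n → Fin d) × (Fin n → Fin d) => pathPos d gg.1 n = pathPos d gg.2 n),
    pairProb d p gg.1 gg.2

open Classical in
noncomputable def betaF (d : ℕ) (p : Fin d → ℝ) (m : ℕ) : ℝ :=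
  ∑ gg ∈ Finset.univ.filter
      (fun gg : (Fin m → Fin d) × (Fin m → Fin d) =>
        (∀ i ∈ Finset.Ioo 0 m, pathPos d gg.1 i ≠ pathPos d gg.2 i) ∧
          pathPos d gg.1 m = pathPos d gg.2 m),
    pairProb d p gg.1 gg.2

noncomputable def firstMeet (d : ℕ) {n : ℕ} (gg : (Fin n → Fin d) × (Fin n → Fin d)) : ℕ :=
  sInf {i | 0 < i ∧ pathPos d gg.1 i = pathPos d gg.2 i}

open Classical in
lemma pathPos_decomp {m k : ℕ} (γ : Fin (m + k) → Fin d) (j : ℕ) :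
    pathPos d γ j = pathPos d (fun t => γ (Fin.castAdd k t)) j
      + pathPos d (fun t => γ (Fin.natAdd m t)) (j - m) := by
  have h := pathPos_append (d := d) (fun t => γ (Fin.castAdd k t)) (fun t => γ (Fin.natAdd m t)) j
  rwa [Fin.append_castAdd_natAdd] at h

lemma pathPos_restrict {m k : ℕ} (γ : Fin (m + k) → Fin d) {j : ℕ} (hj : j ≤ m) :
    pathPos d (fun t => γ (Fin.castAdd k t)) j = pathPos d γ j := by
  rw [pathPos_decomp γ j, show j - m = 0 from by omega, pathPos_zero, add_zero]

lemma pathPos_tail {m k : ℕ} (γ : Fin (m + k) → Fin d) :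
    pathPos d γ (m + k) = pathPos d γ m + pathPos d (fun t => γ (Fin.natAdd m t)) k := by
  rw [pathPos_decomp γ (m + k), Nat.add_sub_cancel_left,
    pathPos_saturate d (fun t => γ (Fin.castAdd k t)) (Nat.le_add_right m k),
    pathPos_restrict γ le_rfl]

open Classical in
lemma fiber_sum (p : Fin d → ℝ) (m k : ℕ) (hm : 1 ≤ m) :
    ∑ gg ∈ (Finset.univ.filter
        (fun gg : (Fin (m + k) → Fin d) × (Fin (m + k) → Fin d) =>
          pathPos d gg.1 (m + k) = pathPos d gg.2 (m + k))).filter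
        (fun gg => firstMeet d gg = m),
      pairProb d p gg.1 gg.2 = betaF d p m * alphaF d p k := by
  classical
  rw [betaF, alphaF, Finset.sum_mul_sum, ← Finset.sum_product']
  refine Finset.sum_nbij'
    (i := fun gg =>
      (((fun t => gg.1 (Fin.castAdd k t)), (fun t => gg.2 (Fin.castAdd k t))),
       ((fun t => gg.1 (Fin.natAdd m t)), (fun t => gg.2 (Fin.natAdd m t)))))
    (j := fun x => (Fin.append x.1.1 x.2.1, Fin.append x.1.2 x.2.2))
    ?_ ?_ ?_ ?_ ?_
  · -- split maps into the product set
    rintro ⟨γ₁, γ₂⟩ hgg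
    simp only [Finset.mem_filter, Finset.mem_univ, true_and] at hgg
    obtain ⟨hend, hFM⟩ := hgg
    have hne : {i | 0 < i ∧ pathPos d γ₁ i = pathPos d γ₂ i}.Nonempty :=
      ⟨m + k, by constructor <;> [omega; exact hend]⟩
    have hmem := Nat.sInf_mem hne
    rw [show sInf {i | 0 < i ∧ pathPos d γ₁ i = pathPos d γ₂ i} = firstMeet d (γ₁, γ₂) from rfl,
      hFM] at hmem
    have hmeets : pathPos d γ₁ m = pathPos d γ₂ m := hmem.2
    have hlow : ∀ i, 0 < i → i < m → pathPos d γ₁ i ≠ pathPos d γ₂ i := by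
      intro i hi0 him hcon
      have h1 : i ∈ {i | 0 < i ∧ pathPos d γ₁ i = pathPos d γ₂ i} := ⟨hi0, hcon⟩
      have h2 := Nat.sInf_le h1
      rw [show sInf {i | 0 < i ∧ pathPos d γ₁ i = pathPos d γ₂ i} = firstMeet d (γ₁, γ₂) from rfl,
        hFM] at h2
      omega
    simp only [Finset.mem_product, Finset.mem_filter, Finset.mem_univ, true_and]
    refine ⟨⟨?_, ?_⟩, ?_⟩
    · intro i hi
      rw [Finset.mem_Ioo] at hi
      rw [pathPos_restrict γ₁ (le_of_lt hi.2), pathPos_restrict γ₂ (le_of_lt hi.2)]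
      exact hlow i hi.1 hi.2
    · rw [pathPos_restrict γ₁ le_rfl, pathPos_restrict γ₂ le_rfl]; exact hmeets
    · have e1 := pathPos_tail γ₁
      have e2 := pathPos_tail γ₂
      rw [hend, e2, hmeets] at e1
      exact (add_left_cancel e1).symm
  · -- join maps into the fiber
    rintro ⟨⟨a₁, a₂⟩, b₁, b₂⟩ hx
    simp only [Finset.mem_product, Finset.mem_filter, Finset.mem_univ, true_and] at hx
    obtain ⟨⟨hdist, hameet⟩, hbend⟩ := hx
    have hend : pathPos d (Fin.append a₁ b₁) (m + k) = pathPos d (Fin.append a₂ b₂) (m + k) := by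
      rw [pathPos_append, pathPos_append, Nat.add_sub_cancel_left,
        pathPos_saturate d a₁ (Nat.le_add_right m k), pathPos_saturate d a₂ (Nat.le_add_right m k),
        hameet, hbend]
    have hmid : ∀ j, j ≤ m → pathPos d (Fin.append a₁ b₁) j = pathPos d a₁ j
        ∧ pathPos d (Fin.append a₂ b₂) j = pathPos d a₂ j := by
      intro j hj
      constructor <;>
        rw [pathPos_append, show j - m = 0 from by omega, pathPos_zero, add_zero]
    simp only [Finset.mem_filter, Finset.mem_univ, true_and]
    refine ⟨hend, ?_⟩
    have hmmem : m ∈ {i | 0 < i ∧ pathPos d (Fin.append a₁ b₁) i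
        = pathPos d (Fin.append a₂ b₂) i} := by
      refine ⟨hm, ?_⟩
      rw [(hmid m le_rfl).1, (hmid m le_rfl).2, hameet]
    refine le_antisymm (Nat.sInf_le hmmem) ?_
    by_contra hcon
    push_neg at hcon
    have hlt : firstMeet d (Fin.append a₁ b₁, Fin.append a₂ b₂) < m := hcon
    have hmem2 := Nat.sInf_mem (⟨m, hmmem⟩ : {i | 0 < i ∧ pathPos d (Fin.append a₁ b₁) i
        = pathPos d (Fin.append a₂ b₂) i}.Nonempty)
    set i₀ := firstMeet d (Fin.append a₁ b₁, Fin.append a₂ b₂) with hi₀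
    have h0 : 0 < i₀ ∧ pathPos d (Fin.append a₁ b₁) i₀ = pathPos d (Fin.append a₂ b₂) i₀ := hmem2
    have : pathPos d a₁ i₀ = pathPos d a₂ i₀ := by
      rw [← (hmid i₀ (le_of_lt hlt)).1, ← (hmid i₀ (le_of_lt hlt)).2]; exact h0.2
    exact hdist i₀ (Finset.mem_Ioo.2 ⟨h0.1, hlt⟩) this
  · -- left inverse
    rintro ⟨γ₁, γ₂⟩ _
    simp only [Prod.mk.injEq]
    exact ⟨Fin.append_castAdd_natAdd, Fin.append_castAdd_natAdd⟩
  · -- right inverse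
    rintro ⟨⟨a₁, a₂⟩, b₁, b₂⟩ _
    simp only [Prod.mk.injEq]
    refine ⟨⟨?_, ?_⟩, ?_, ?_⟩ <;> funext t <;>
      simp [Fin.append_left, Fin.append_right]
  · -- values multiply
    rintro ⟨γ₁, γ₂⟩ hgg
    simp only [Finset.mem_filter, Finset.mem_univ, true_and] at hgg
    obtain ⟨hend, hFM⟩ := hgg
    have hne : {i | 0 < i ∧ pathPos d γ₁ i = pathPos d γ₂ i}.Nonempty :=
      ⟨m + k, by constructor <;> [omega; exact hend]⟩
    have hmem := Nat.sInf_mem hne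
    rw [show sInf {i | 0 < i ∧ pathPos d γ₁ i = pathPos d γ₂ i} = firstMeet d (γ₁, γ₂) from rfl,
      hFM] at hmem
    have hmeets : pathPos d (fun t => γ₁ (Fin.castAdd k t)) m
        = pathPos d (fun t => γ₂ (Fin.castAdd k t)) m := by
      rw [pathPos_restrict γ₁ le_rfl, pathPos_restrict γ₂ le_rfl]; exact hmem.2
    have h := pairProb_append p (fun t => γ₁ (Fin.castAdd k t)) (fun t => γ₂ (Fin.castAdd k t))
      (fun t => γ₁ (Fin.natAdd m t)) (fun t => γ₂ (Fin.natAdd m t)) hmeets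
    rw [Fin.append_castAdd_natAdd, Fin.append_castAdd_natAdd] at h
    exact h


open Classical in
lemma alphaF_renewal (p : Fin d → ℝ) (n : ℕ) (hn : 1 ≤ n) :
    alphaF d p n = ∑ m ∈ Finset.Icc 1 n, betaF d p m * alphaF d p (n - m) := by
  classical
  have hmaps : ∀ gg ∈ Finset.univ.filter
      (fun gg : (Fin n → Fin d) × (Fin n → Fin d) => pathPos d gg.1 n = pathPos d gg.2 n),
      firstMeet d gg ∈ Finset.Icc 1 n := by
    rintro ⟨γ₁, γ₂⟩ hgg
    simp only [Finset.mem_filter, Finset.mem_univ, true_and] at hgg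
    have hne : {i | 0 < i ∧ pathPos d γ₁ i = pathPos d γ₂ i}.Nonempty := ⟨n, hn, hgg⟩
    have h1 := Nat.sInf_mem hne
    have h2 : sInf {i | 0 < i ∧ pathPos d γ₁ i = pathPos d γ₂ i} ≤ n :=
      Nat.sInf_le (show n ∈ {i | 0 < i ∧ pathPos d γ₁ i = pathPos d γ₂ i} from ⟨hn, hgg⟩)
    exact Finset.mem_Icc.2 ⟨h1.1, h2⟩
  rw [alphaF, ← Finset.sum_fiberwise_of_maps_to hmaps]
  refine Finset.sum_congr rfl fun m hm => ?_
  obtain ⟨hm1, hmn⟩ := Finset.mem_Icc.1 hm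
  obtain ⟨k, rfl⟩ : ∃ k, n = m + k := ⟨n - m, by omega⟩
  rw [Nat.add_sub_cancel_left]
  exact fiber_sum p m k hm1

lemma alphaF_zero (p : Fin d → ℝ) : alphaF d p 0 = 1 := by
  classical
  rw [alphaF]
  rw [Finset.filter_true_of_mem (fun gg _ => by
    simp [pathPos])]
  rw [show (Finset.univ : Finset ((Fin 0 → Fin d) × (Fin 0 → Fin d)))
      = {(finZeroElim, finZeroElim)} from by
    apply Finset.eq_singleton_iff_unique_mem.2
    refine ⟨Finset.mem_univ _, fun x _ => ?_⟩
    ext i <;> exact i.elim0]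
  rw [Finset.sum_singleton]
  simp [pairProb, pathEdges]

lemma pairProb_nonneg (p : Fin d → ℝ) (hp : ∀ i, 0 < p i) {n : ℕ} (γ₁ γ₂ : Fin n → Fin d) :
    0 ≤ pairProb d p γ₁ γ₂ :=
  Finset.prod_nonneg fun e _ => le_of_lt (hp e.2)

lemma alphaF_nonneg (p : Fin d → ℝ) (hp : ∀ i, 0 < p i) (n : ℕ) : 0 ≤ alphaF d p n :=
  Finset.sum_nonneg fun gg _ => pairProb_nonneg p hp gg.1 gg.2

lemma betaF_nonneg (p : Fin d → ℝ) (hp : ∀ i, 0 < p i) (m : ℕ) : 0 ≤ betaF d p m :=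
  Finset.sum_nonneg fun gg _ => pairProb_nonneg p hp gg.1 gg.2


lemma aSeq_eq (p : Fin d → ℝ) (n : ℕ) : aSeq d p n = alphaF d p n / (∑ i, p i) ^ (2 * n) := rfl

lemma bSeq_eq (p : Fin d → ℝ) (m : ℕ) : bSeq d p m = betaF d p m / (∑ i, p i) ^ (2 * m) := rfl

lemma aSeq_renewal (hd : 1 ≤ d) (p : Fin d → ℝ) (hp : ∀ i, 0 < p i) (n : ℕ) (hn : 1 ≤ n) :
    aSeq d p n = ∑ m ∈ Finset.Icc 1 n, bSeq d p m * aSeq d p (n - m) := by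
  have hμ : (0 : ℝ) < ∑ i, p i := by
    haveI : Nonempty (Fin d) := Fin.pos_iff_nonempty.1 hd
    exact Finset.sum_pos (fun i _ => hp i) Finset.univ_nonempty
  rw [aSeq_eq, alphaF_renewal p n hn, Finset.sum_div]
  refine Finset.sum_congr rfl fun m hm => ?_
  obtain ⟨hm1, hmn⟩ := Finset.mem_Icc.1 hm
  rw [bSeq_eq, aSeq_eq, div_mul_div_comm, ← pow_add]
  congr 2
  omega

lemma aSeq_zero (p : Fin d → ℝ) : aSeq d p 0 = 1 := by
  rw [aSeq_eq, alphaF_zero, mul_zero, pow_zero, div_one]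

lemma aSeq_nonneg (p : Fin d → ℝ) (hp : ∀ i, 0 < p i) (hμ : (0:ℝ) < ∑ i, p i) (n : ℕ) :
    0 ≤ aSeq d p n := by
  rw [aSeq_eq]
  exact div_nonneg (alphaF_nonneg p hp n) (le_of_lt (pow_pos hμ _))

lemma bSeq_nonneg (p : Fin d → ℝ) (hp : ∀ i, 0 < p i) (hμ : (0:ℝ) < ∑ i, p i) (m : ℕ) :
    0 ≤ bSeq d p m := by
  rw [bSeq_eq]
  exact div_nonneg (betaF_nonneg p hp m) (le_of_lt (pow_pos hμ _))


noncomputable def convo (g : ℕ → ℝ≥0∞) : ℕ → ℕ → ℝ≥0∞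
  | 0, n => if n = 0 then 1 else 0
  | (k+1), n => ∑ m ∈ Finset.Icc 1 n, g m * convo g k (n - m)

lemma convo_apply_zero (g : ℕ → ℝ≥0∞) (k : ℕ) : convo g k 0 = if k = 0 then 1 else 0 := by
  cases k with
  | zero => simp [convo]
  | succ k => simp [convo]

lemma tsum_shift (f : ℕ → ℝ≥0∞) : ∑' n, f n = f 0 + ∑' n, f (n + 1) :=
  tsum_eq_zero_add' ENNReal.summable

lemma tsum_conv (u v : ℕ → ℝ≥0∞) :
    ∑' n, ∑ m ∈ Finset.Icc 1 n, u m * v (n - m) = (∑' m, u (m + 1)) * ∑' l, v l := by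
  have h1 : ∀ n : ℕ, ∑ m ∈ Finset.Icc 1 n, u m * v (n - m)
      = ∑' m : ℕ, if m ∈ Finset.Icc 1 n then u m * v (n - m) else 0 := by
    intro n
    rw [tsum_eq_sum (s := Finset.Icc 1 n) (fun b hb => if_neg hb)]
    exact Finset.sum_congr rfl fun m hm => (if_pos hm).symm
  calc ∑' n, ∑ m ∈ Finset.Icc 1 n, u m * v (n - m)
      = ∑' (n) (m : ℕ), if m ∈ Finset.Icc 1 n then u m * v (n - m) else 0 := tsum_congr h1
    _ = ∑' (m) (n : ℕ), if m ∈ Finset.Icc 1 n then u m * v (n - m) else 0 := ENNReal.tsum_comm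
    _ = ∑' m, (if 1 ≤ m then u m * ∑' l, v l else 0) := by
        refine tsum_congr fun m => ?_
        by_cases hm : 1 ≤ m
        · rw [if_pos hm, ← ENNReal.tsum_mul_left]
          have hinj : Function.Injective (fun l : ℕ => l + m) := add_left_injective m
          have hsupp : Function.support
              (fun n : ℕ => if m ∈ Finset.Icc 1 n then u m * v (n - m) else 0)
              ⊆ Set.range (fun l : ℕ => l + m) := by
            intro n hn
            simp only [Function.mem_support, ne_eq, ite_eq_right_iff, not_forall] at hn
            obtain ⟨hmem, -⟩ := hn
            exact ⟨n - m, Nat.sub_add_cancel (Finset.mem_Icc.1 hmem).2⟩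
          rw [← Function.Injective.tsum_eq hinj hsupp]
          refine tsum_congr fun l => ?_
          rw [if_pos (Finset.mem_Icc.2 ⟨hm, Nat.le_add_left m l⟩), Nat.add_sub_cancel]
        · have hm0 : m = 0 := by omega
          rw [if_neg hm]
          refine (Summable.tsum_eq_zero_iff ENNReal.summable).2 fun n => ?_
          rw [if_neg (by simp [hm0])]
    _ = (∑' m, u (m + 1)) * ∑' l, v l := by
        rw [tsum_shift (fun m => if 1 ≤ m then u m * ∑' l, v l else 0)]
        simp only [if_neg (by omega : ¬ (1:ℕ) ≤ 0), zero_add,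
          if_pos (by omega : ∀ {m : ℕ}, 1 ≤ m + 1)]
        rw [← ENNReal.tsum_mul_right]
        exact tsum_congr fun m => by rw [if_pos (by omega : 1 ≤ m + 1)]

lemma tsum_convo_eq_pow (g : ℕ → ℝ≥0∞) (k : ℕ) :
    ∑' n, convo g k n = (∑' m, g (m + 1)) ^ k := by
  induction k with
  | zero =>
    rw [pow_zero]
    rw [show (fun n => convo g 0 n) = fun n => if n = 0 then (1:ℝ≥0∞) else 0 from rfl]
    rw [tsum_eq_single 0 (fun b hb => if_neg hb)]
    simp
  | succ k ih =>
    rw [show (fun n => convo g (k+1) n)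
        = fun n => ∑ m ∈ Finset.Icc 1 n, g m * convo g k (n - m) from rfl]
    rw [tsum_conv g (convo g k), ih, pow_succ']

lemma f_eq_tsum_convo (f g : ℕ → ℝ≥0∞) (hf0 : f 0 = 1)
    (hrec : ∀ n, 1 ≤ n → f n = ∑ m ∈ Finset.Icc 1 n, g m * f (n - m)) :
    ∀ n, f n = ∑' k, convo g k n := by
  intro n
  induction n using Nat.strong_induction_on with
  | _ n ih =>
    cases n with
    | zero =>
      rw [hf0, tsum_eq_single 0 (fun k hk => by rw [convo_apply_zero, if_neg hk])]
      simp [convo]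
    | succ n =>
      rw [hrec (n+1) (by omega)]
      have h1 : ∀ m ∈ Finset.Icc 1 (n+1), g m * f (n+1-m) = ∑' k, g m * convo g k (n+1-m) := by
        intro m hm
        have := Finset.mem_Icc.1 hm
        rw [ih (n+1-m) (by omega), ENNReal.tsum_mul_left]
      rw [Finset.sum_congr rfl h1, ← Summable.tsum_finsetSum (fun i _ => ENNReal.summable)]
      have h2 : ∀ k : ℕ, (∑ m ∈ Finset.Icc 1 (n+1), g m * convo g k (n+1-m))
          = convo g (k+1) (n+1) := fun k => rfl
      rw [tsum_congr h2]
      conv_rhs => rw [tsum_shift (fun k => convo g k (n+1))]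
      rw [show convo g 0 (n+1) = 0 from by simp [convo], zero_add]

lemma tsum_renewal (f g : ℕ → ℝ≥0∞) (hf0 : f 0 = 1)
    (hrec : ∀ n, 1 ≤ n → f n = ∑ m ∈ Finset.Icc 1 n, g m * f (n - m)) :
    ∑' n, f (n + 1) = ∑' j, (∑' m, g (m + 1)) ^ (j + 1) := by
  have hconv := f_eq_tsum_convo f g hf0 hrec
  have step1 : ∑' n, f (n+1) = ∑' (k) (n : ℕ), convo g k (n+1) := by
    rw [tsum_congr fun n => hconv (n+1)]
    exact ENNReal.tsum_comm
  rw [step1, tsum_shift (fun k => ∑' n, convo g k (n+1))]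
  have h0 : (∑' n : ℕ, convo g 0 (n+1)) = 0 :=
    (Summable.tsum_eq_zero_iff ENNReal.summable).2 fun n => by simp [convo]
  rw [h0, zero_add]
  refine tsum_congr fun k => ?_
  have hk := tsum_convo_eq_pow g (k+1)
  rw [tsum_shift (fun n => convo g (k+1) n), convo_apply_zero,
    if_neg (by omega : ¬ k + 1 = 0), zero_add] at hk
  exact hk

end ORTest
theorem aSeq_tsum_eq_geometric_of_bSeq_tsum
    (d : ℕ) (hd : 1 ≤ d)
    (p : Fin d → ℝ) (hp : ∀ i, p i ∈ Set.Ioo (0 : ℝ) 1) :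
    ∑' n : ℕ, ENNReal.ofReal (aSeq d p (n + 1))
      = ∑' j : ℕ, (∑' m : ℕ, ENNReal.ofReal (bSeq d p (m + 1))) ^ (j + 1) := by
  have hp' : ∀ i, 0 < p i := fun i => (hp i).1
  have hμ : (0:ℝ) < ∑ i, p i := by
    haveI : Nonempty (Fin d) := Fin.pos_iff_nonempty.1 hd
    exact Finset.sum_pos (fun i _ => hp' i) Finset.univ_nonempty
  have hf0 : ENNReal.ofReal (aSeq d p 0) = 1 := by rw [ORTest.aSeq_zero, ENNReal.ofReal_one]
  have hrec : ∀ n, 1 ≤ n → ENNReal.ofReal (aSeq d p n)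
      = ∑ m ∈ Finset.Icc 1 n,
          ENNReal.ofReal (bSeq d p m) * ENNReal.ofReal (aSeq d p (n - m)) := by
    intro n hn
    rw [ORTest.aSeq_renewal hd p hp' n hn,
      ENNReal.ofReal_sum_of_nonneg (fun m _ => mul_nonneg (ORTest.bSeq_nonneg p hp' hμ m)
        (ORTest.aSeq_nonneg p hp' hμ _))]
    exact Finset.sum_congr rfl fun m _ => ENNReal.ofReal_mul (ORTest.bSeq_nonneg p hp' hμ m)
  exact ORTest.tsum_renewal (fun n => ENNReal.ofReal (aSeq d p n))
    (fun m => ENNReal.ofReal (bSeq d p m)) hf0 hrec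
end

section
/- Let d ≥ 4 and 4 ≤ m ≤ d be integers, and let q* = (1/m, …, 1/m, 0, …, 0) be the d-dimensional probability vector with m coordinates equal to 1/m. Then for every d-dimensional probability vector q with max_{1≤i≤d} q_i ≤ 1/m, one has λ(q) ≤ λ(q*). -/
open Finset Complex

namespace LamAux

noncomputable def zeta (M : ℕ) : ℂ := Complex.exp (2 * Real.pi * Complex.I / M)

lemma zeta_ne_zero (M : ℕ) : zeta M ≠ 0 := Complex.exp_ne_zero _

lemma zeta_pow_M (M : ℕ) (hM : 0 < M) : zeta M ^ M = 1 := by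
  rw [zeta, ← Complex.exp_nat_mul]
  have hM0 : (M:ℂ) ≠ 0 := by exact_mod_cast hM.ne'
  rw [show (M:ℂ) * (2 * Real.pi * Complex.I / M) = 2 * Real.pi * Complex.I by
    field_simp]
  exact Complex.exp_two_pi_mul_I

lemma zeta_zpow_eq_one_iff (M : ℕ) (hM : 0 < M) (k : ℤ) (hk : |k| < M) :
    zeta M ^ k = 1 ↔ k = 0 := by
  constructor
  · intro h
    rw [zeta, ← Complex.exp_int_mul, Complex.exp_eq_one_iff] at h
    obtain ⟨n, hn⟩ := h
    have hM0 : (M:ℂ) ≠ 0 := by exact_mod_cast hM.ne'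
    have hpi : (2 * Real.pi * Complex.I : ℂ) ≠ 0 := by
      simp [Real.pi_ne_zero, Complex.I_ne_zero]
    have : (k : ℂ) = n * M := by
      field_simp at hn
      have hn' : (k:ℂ) * (2 * Real.pi * Complex.I) = (n * M) * (2 * Real.pi * Complex.I) := by
        linear_combination (2 * Real.pi * Complex.I) * hn
      have := mul_right_cancel₀ hpi hn'
      linear_combination this
    have hkint : k = n * M := by exact_mod_cast this
    rcases eq_or_ne n 0 with rfl | hn0
    · simpa using hkint
    · exfalso
      have : (M:ℤ) ≤ |k| := by
        rw [hkint, abs_mul, abs_of_nonneg (by positivity : (0:ℤ) ≤ (M:ℤ))]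
        nlinarith [Int.one_le_abs hn0]
      omega
  · rintro rfl; simp


lemma conj_zeta (M : ℕ) : (starRingEnd ℂ) (zeta M) = (zeta M)⁻¹ := by
  rw [zeta, ← Complex.exp_conj, ← Complex.exp_neg]
  congr 1
  simp [map_div₀, Complex.conj_I, map_mul, map_ofNat]
  ring


lemma root_sum (M : ℕ) (hM : 0 < M) (a b : ℕ) (ha : a < M) (hb : b < M) :
    ∑ x : Fin M, (zeta M ^ (x:ℕ)) ^ a * (starRingEnd ℂ) (zeta M ^ (x:ℕ)) ^ b
      = if a = b then (M : ℂ) else 0 := by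
  have hz := zeta_ne_zero M
  have key : ∀ x : ℕ, (zeta M ^ x) ^ a * (starRingEnd ℂ) (zeta M ^ x) ^ b
      = (zeta M ^ ((a:ℤ) - b)) ^ x := by
    intro x
    rw [map_pow, conj_zeta]
    rw [← pow_mul, inv_pow, inv_pow, ← pow_mul]
    calc zeta M ^ (x*a) * (zeta M ^ (x*b))⁻¹
        = zeta M ^ ((x*a:ℕ):ℤ) * (zeta M ^ ((x*b:ℕ):ℤ))⁻¹ := by
          rw [zpow_natCast, zpow_natCast]
      _ = zeta M ^ (((x*a:ℕ):ℤ) - ((x*b:ℕ):ℤ)) := by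
          rw [zpow_sub₀ hz, div_eq_mul_inv]
      _ = (zeta M ^ ((a:ℤ)-b)) ^ (x:ℤ) := by
          rw [← zpow_mul]; congr 1; push_cast; ring
      _ = (zeta M ^ ((a:ℤ)-b)) ^ x := zpow_natCast _ x
  simp only [key]
  rw [Fin.sum_univ_eq_sum_range (fun x => (zeta M ^ ((a:ℤ) - b)) ^ x)]
  rcases eq_or_ne a b with rfl | hab
  · simp
  · rw [if_neg hab]
    have hk : |(a:ℤ) - b| < M := by
      rw [abs_sub_lt_iff]; constructor <;> [skip; skip] <;> push_cast <;> omega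
    have hω : zeta M ^ ((a:ℤ) - b) ≠ 1 := by
      rw [Ne, zeta_zpow_eq_one_iff M hM _ hk]
      intro h; apply hab; omega
    rw [geom_sum_eq hω]
    have : (zeta M ^ ((a:ℤ) - b)) ^ M = 1 := by
      rw [← zpow_natCast (zeta M ^ ((a:ℤ) - b)) M, ← zpow_mul, mul_comm, zpow_mul,
        zpow_natCast, zeta_pow_M M hM, one_zpow]
    rw [this]
    simp

variable {d : ℕ}

/-- the multinomial coefficient term -/
noncomputable def c (q : Fin d → ℝ) (l : Fin d → ℕ) : ℝ :=
  (Nat.multinomial Finset.univ l : ℝ) * ∏ i, q i ^ l i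

noncomputable def F (N : ℕ) (q : Fin d → ℝ) : ℝ :=
  ∑ l ∈ Finset.Nat.antidiagonalTuple d N, (c q l) ^ 2

noncomputable def phi (M : ℕ) (q : Fin d → ℝ) (ξ : Fin d → Fin M) : ℂ :=
  ∑ i, (q i : ℂ) * zeta M ^ (ξ i : ℕ)

noncomputable def S (N M : ℕ) (q : Fin d → ℝ) : ℝ :=
  ∑ ξ : Fin d → Fin M, ‖phi M q ξ‖ ^ (2 * N)

lemma phi_pow (M N : ℕ) (q : Fin d → ℝ) (ξ : Fin d → Fin M) :
    phi M q ξ ^ N = ∑ l ∈ Finset.Nat.antidiagonalTuple d N,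
      (c q l : ℂ) * ∏ i, (zeta M ^ (ξ i : ℕ)) ^ l i := by
  rw [phi, Finset.sum_pow_eq_sum_piAntidiag,
    Finset.piAntidiag_univ_fin_eq_antidiagonalTuple]
  refine Finset.sum_congr rfl fun l _ => ?_
  rw [c]
  push_cast
  rw [mul_assoc, ← Finset.prod_mul_distrib]
  congr 1
  exact Finset.prod_congr rfl fun i _ => (mul_pow _ _ _)

lemma S_eq (N M : ℕ) (hNM : N < M) (q : Fin d → ℝ) :
    S N M q = (M:ℝ)^d * F N q := by
  have hM : 0 < M := lt_of_le_of_lt (Nat.zero_le N) hNM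
  apply Complex.ofReal_injective
  have lhs : ((S N M q : ℝ) : ℂ)
      = ∑ ξ : Fin d → Fin M, (phi M q ξ) ^ N * (starRingEnd ℂ) ((phi M q ξ) ^ N) := by
    have key : ∀ z : ℂ, ((‖z‖ ^ (2*N) : ℝ) : ℂ) = z^N * (starRingEnd ℂ) (z^N) := by
      intro z
      rw [Complex.mul_conj, map_pow]
      congr 1
      rw [pow_mul, Complex.sq_norm]
    rw [S]
    push_cast [← key]
    rfl
  rw [lhs]
  -- expand
  have expand : ∀ ξ : Fin d → Fin M, (phi M q ξ) ^ N * (starRingEnd ℂ) ((phi M q ξ) ^ N)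
      = ∑ l ∈ Finset.Nat.antidiagonalTuple d N, ∑ l' ∈ Finset.Nat.antidiagonalTuple d N,
        ((c q l : ℂ) * (c q l')) *
          ∏ i, ((zeta M ^ (ξ i : ℕ)) ^ l i * (starRingEnd ℂ) (zeta M ^ (ξ i : ℕ)) ^ l' i) := by
    intro ξ
    rw [phi_pow, map_sum, Finset.sum_mul_sum]
    refine Finset.sum_congr rfl fun l _ => Finset.sum_congr rfl fun l' _ => ?_
    rw [map_mul, map_prod]
    have : (starRingEnd ℂ) ((c q l' : ℝ) : ℂ) = ((c q l' : ℝ) : ℂ) := Complex.conj_ofReal _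
    rw [this]
    rw [Finset.prod_mul_distrib]
    simp only [map_pow]
    ring
  simp only [expand]
  rw [Finset.sum_comm]
  -- now inner sum over ξ
  have inner : ∀ l ∈ Finset.Nat.antidiagonalTuple d N, ∀ l' ∈ Finset.Nat.antidiagonalTuple d N,
      (∑ ξ : Fin d → Fin M,
        ∏ i, ((zeta M ^ (ξ i : ℕ)) ^ l i * (starRingEnd ℂ) (zeta M ^ (ξ i : ℕ)) ^ l' i))
      = if l' = l then ((M:ℂ))^d else 0 := by
    intro l hl l' hl'
    have hbd : ∀ (f : Fin d → ℕ), f ∈ Finset.Nat.antidiagonalTuple d N → ∀ i, f i < M := by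
      intro f hf i
      rw [Finset.Nat.mem_antidiagonalTuple] at hf
      calc f i ≤ ∑ j, f j := Finset.single_le_sum (fun j _ => Nat.zero_le _) (Finset.mem_univ i)
        _ = N := hf
        _ < M := hNM
    have : (∑ ξ : Fin d → Fin M,
        ∏ i, ((zeta M ^ (ξ i : ℕ)) ^ l i * (starRingEnd ℂ) (zeta M ^ (ξ i : ℕ)) ^ l' i))
        = ∏ i, ∑ x : Fin M, ((zeta M ^ (x:ℕ)) ^ l i * (starRingEnd ℂ) (zeta M ^ (x:ℕ)) ^ l' i) := by
      rw [Finset.prod_univ_sum]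
      rw [Fintype.piFinset_univ]
    rw [this]
    have each : ∀ i, (∑ x : Fin M, ((zeta M ^ (x:ℕ)) ^ l i * (starRingEnd ℂ) (zeta M ^ (x:ℕ)) ^ l' i))
        = if l i = l' i then (M:ℂ) else 0 := fun i =>
      root_sum M hM (l i) (l' i) (hbd l hl i) (hbd l' hl' i)
    simp only [each]
    rcases eq_or_ne l' l with rfl | hne
    · simp
    · rw [if_neg hne]
      obtain ⟨i, hi⟩ : ∃ i, l i ≠ l' i := by
        by_contra h
        push_neg at h
        exact hne (funext fun i => (h i).symm)
      exact Finset.prod_eq_zero (Finset.mem_univ i) (by rw [if_neg hi])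
  have swap2 : ∀ l ∈ Finset.Nat.antidiagonalTuple d N,
      (∑ ξ : Fin d → Fin M, ∑ l' ∈ Finset.Nat.antidiagonalTuple d N,
        ((c q l : ℂ) * (c q l')) *
          ∏ i, ((zeta M ^ (ξ i : ℕ)) ^ l i * (starRingEnd ℂ) (zeta M ^ (ξ i : ℕ)) ^ l' i))
      = ((c q l)^2 : ℝ) * ((M:ℂ))^d := by
    intro l hl
    rw [Finset.sum_comm]
    have : ∀ l' ∈ Finset.Nat.antidiagonalTuple d N,
        (∑ ξ : Fin d → Fin M, ((c q l : ℂ) * (c q l')) *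
          ∏ i, ((zeta M ^ (ξ i : ℕ)) ^ l i * (starRingEnd ℂ) (zeta M ^ (ξ i : ℕ)) ^ l' i))
        = if l' = l then ((c q l : ℂ) * (c q l')) * ((M:ℂ))^d else 0 := by
      intro l' hl'
      rw [← Finset.mul_sum, inner l hl l' hl']
      split_ifs with h
      · rfl
      · rw [mul_zero]
    rw [Finset.sum_congr rfl this, Finset.sum_ite_eq' (Finset.Nat.antidiagonalTuple d N) l
      (fun l' => ((c q l : ℂ) * (c q l')) * ((M:ℂ))^d), if_pos hl]
    push_cast
    ring
  rw [Finset.sum_congr rfl swap2]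
  rw [F]
  push_cast
  rw [← Finset.sum_mul]
  ring

-- symmetry
lemma S_comp_perm (N M : ℕ) (q : Fin d → ℝ) (σ : Equiv.Perm (Fin d)) :
    S N M (q ∘ σ) = S N M q := by
  rw [S, S]
  apply Fintype.sum_equiv (Equiv.arrowCongr σ (Equiv.refl (Fin M)))
  intro ξ
  congr 2
  rw [phi, phi]
  apply Fintype.sum_equiv σ
  intro i
  simp

-- linearity of phi
lemma phi_line (M : ℕ) (q v : Fin d → ℝ) (t : ℝ) (ξ : Fin d → Fin M) :
    phi M (fun k => q k + t * v k) ξ = phi M q ξ + t • phi M v ξ := by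
  rw [phi, phi, phi, Finset.smul_sum, ← Finset.sum_add_distrib]
  refine Finset.sum_congr rfl fun i _ => ?_
  rw [Complex.real_smul]
  push_cast
  ring

lemma convexOn_finset_sum {ι : Type*} (s : Finset ι) (f : ι → ℝ → ℝ)
    (h : ∀ i ∈ s, ConvexOn ℝ Set.univ (f i)) :
    ConvexOn ℝ Set.univ (fun t => ∑ i ∈ s, f i t) := by
  classical
  induction s using Finset.induction with
  | empty => simpa using convexOn_const (0:ℝ) convex_univ
  | @insert x s hx ih =>
    simp_rw [Finset.sum_insert hx]
    exact (h _ (Finset.mem_insert_self _ _)).add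
      (ih fun i hi => h i (Finset.mem_insert_of_mem hi))

lemma S_convexOn (N M : ℕ) (q v : Fin d → ℝ) :
    ConvexOn ℝ Set.univ (fun t : ℝ => S N M (fun k => q k + t * v k)) := by
  have : (fun t : ℝ => S N M (fun k => q k + t * v k))
      = fun t : ℝ => ∑ ξ : Fin d → Fin M,
          ‖(AffineMap.lineMap (phi M q ξ) (phi M q ξ + phi M v ξ) : ℝ →ᵃ[ℝ] ℂ) t‖ ^ (2*N) := by
    funext t
    rw [S]
    refine Finset.sum_congr rfl fun ξ _ => ?_
    rw [phi_line, AffineMap.lineMap_apply]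
    congr 2
    simp [vsub_eq_sub]
    ring
  rw [this]
  apply convexOn_finset_sum
  intro ξ _
  have h1 : ConvexOn ℝ Set.univ (fun t : ℝ =>
      ‖(AffineMap.lineMap (phi M q ξ) (phi M q ξ + phi M v ξ) : ℝ →ᵃ[ℝ] ℂ) t‖) := by
    have := (convexOn_univ_norm (E := ℂ)).comp_affineMap
      (AffineMap.lineMap (phi M q ξ) (phi M q ξ + phi M v ξ) : ℝ →ᵃ[ℝ] ℂ)
    simpa [Set.preimage_univ, Function.comp_def] using this
  exact h1.pow (fun x _ => norm_nonneg _) (2*N)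


lemma subtypeCongr_left {α : Type*} {p q : α → Prop} [DecidablePred p] [DecidablePred q]
    (e : { x // p x } ≃ { x // q x }) (f : { x // ¬p x } ≃ { x // ¬q x }) (a : α) (h : p a) :
    q ((Equiv.subtypeCongr e f) a : α) := by
  simp only [Equiv.subtypeCongr, Equiv.trans_apply, Equiv.sumCompl_symm_apply_of_pos h,
    Equiv.sumCongr_apply, Sum.map_inl, Equiv.sumCompl_apply_inl]
  exact (e ⟨a, h⟩).2

lemma subtypeCongr_right {α : Type*} {p q : α → Prop} [DecidablePred p] [DecidablePred q]
    (e : { x // p x } ≃ { x // q x }) (f : { x // ¬p x } ≃ { x // ¬q x }) (a : α) (h : ¬ p a) :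
    ¬ q ((Equiv.subtypeCongr e f) a : α) := by
  simp only [Equiv.subtypeCongr, Equiv.trans_apply, Equiv.sumCompl_symm_apply_of_neg h,
    Equiv.sumCongr_apply, Sum.map_inr, Equiv.sumCompl_apply_inr]
  exact (f ⟨a, h⟩).2

lemma card_filter_lt (m : ℕ) (hmd : m ≤ d) :
    (Finset.univ.filter (fun i : Fin d => (i:ℕ) < m)).card = m := by
  have himg : Finset.univ.filter (fun i : Fin d => (i:ℕ) < m)
      = Finset.image (Fin.castLE hmd) Finset.univ := by
    ext i
    simp only [Finset.mem_filter, Finset.mem_univ, true_and]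
    constructor
    · intro h
      exact Finset.mem_image.mpr ⟨⟨(i:ℕ), h⟩, Finset.mem_univ _, Fin.ext rfl⟩
    · intro h
      obtain ⟨j, -, rfl⟩ := Finset.mem_image.mp h
      exact j.2
  rw [himg, Finset.card_image_of_injective _ (Fin.castLE_injective hmd)]
  simp

lemma base_case (N M m : ℕ) (hm : 0 < m) (hmd : m ≤ d) (q : Fin d → ℝ)
    (h : ∀ i, q i = 0 ∨ q i = 1/(m:ℝ)) (hsum : ∑ i, q i = 1)
    (qstar : Fin d → ℝ) (hqstar : ∀ i, qstar i = if (i:ℕ) < m then 1/(m:ℝ) else 0) :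
    S N M q = S N M qstar := by
  classical
  have hm0 : (m:ℝ) ≠ 0 := by exact_mod_cast hm.ne'
  -- card of support is m
  have hcard : (Finset.univ.filter (fun i : Fin d => q i = 1/(m:ℝ))).card = m := by
    have hsplit := Finset.sum_filter_add_sum_filter_not Finset.univ
      (fun i : Fin d => q i = 1/(m:ℝ)) q
    have h1 : ∑ i ∈ Finset.univ.filter (fun i : Fin d => q i = 1/(m:ℝ)), q i
        = (Finset.univ.filter (fun i : Fin d => q i = 1/(m:ℝ))).card * (1/(m:ℝ)) := by
      rw [Finset.sum_congr rfl (fun i hi => (Finset.mem_filter.mp hi).2)]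
      rw [Finset.sum_const, nsmul_eq_mul]
    have h2 : ∑ i ∈ Finset.univ.filter (fun i : Fin d => ¬ q i = 1/(m:ℝ)), q i = 0 := by
      refine Finset.sum_eq_zero fun i hi => ?_
      rcases h i with h0 | h1m
      · exact h0
      · exact absurd h1m (Finset.mem_filter.mp hi).2
    rw [h1, h2, hsum, add_zero, mul_one_div, div_eq_one_iff_eq hm0] at hsplit
    exact_mod_cast hsplit
  -- build the permutation
  have hc1 : Fintype.card {i : Fin d // (i:ℕ) < m} = Fintype.card {i : Fin d // q i = 1/(m:ℝ)} := by
    rw [Fintype.card_subtype, Fintype.card_subtype, hcard, card_filter_lt m hmd]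
  have hc2 : Fintype.card {i : Fin d // ¬ (i:ℕ) < m} = Fintype.card {i : Fin d // ¬ q i = 1/(m:ℝ)} := by
    rw [Fintype.card_subtype_compl, Fintype.card_subtype_compl, hc1]
  let e := Fintype.equivOfCardEq hc1
  let f := Fintype.equivOfCardEq hc2
  let σ : Equiv.Perm (Fin d) := Equiv.subtypeCongr e f
  have hqs : qstar = q ∘ σ := by
    funext i
    rw [hqstar]
    by_cases hi : (i:ℕ) < m
    · rw [if_pos hi]
      have := subtypeCongr_left e f i hi
      simp only [Function.comp_apply]
      exact this.symm
    · rw [if_neg hi]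
      have := subtypeCongr_right e f i hi
      simp only [Function.comp_apply]
      rcases h (σ i) with h0 | h1m
      · exact h0.symm
      · exact absurd h1m this
  rw [hqs, S_comp_perm]

noncomputable def badSet (m : ℕ) (q : Fin d → ℝ) : Finset (Fin d) :=
  Finset.univ.filter (fun k => q k ≠ 0 ∧ q k ≠ 1/(m:ℝ))

lemma sum_good (m : ℕ) (s : Finset (Fin d)) (q : Fin d → ℝ)
    (h : ∀ i ∈ s, q i = 0 ∨ q i = 1/(m:ℝ)) :
    ∑ i ∈ s, q i = (s.filter (fun i => q i = 1/(m:ℝ))).card * (1/(m:ℝ)) := by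
  classical
  rw [← Finset.sum_filter_add_sum_filter_not s (fun i => q i = 1/(m:ℝ)) q]
  have h1 : ∑ i ∈ s.filter (fun i => q i = 1/(m:ℝ)), q i
      = (s.filter (fun i => q i = 1/(m:ℝ))).card * (1/(m:ℝ)) := by
    rw [Finset.sum_congr rfl (fun i hi => (Finset.mem_filter.mp hi).2)]
    rw [Finset.sum_const, nsmul_eq_mul]
  have h2 : ∑ i ∈ s.filter (fun i => ¬ q i = 1/(m:ℝ)), q i = 0 := by
    refine Finset.sum_eq_zero fun i hi => ?_
    rcases h i (Finset.mem_filter.mp hi).1 with h0 | h1m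
    · exact h0
    · exact absurd h1m (Finset.mem_filter.mp hi).2
  rw [h1, h2, add_zero]

lemma bad_card_ne_one (m : ℕ) (hm : 0 < m) (q : Fin d → ℝ)
    (hq0 : ∀ i, 0 ≤ q i) (hq1 : ∑ i, q i = 1) (hqm : ∀ i, q i ≤ 1/(m:ℝ)) :
    (badSet m q).card ≠ 1 := by
  classical
  intro hcard
  obtain ⟨i, hi⟩ := Finset.card_eq_one.mp hcard
  have hibad : q i ≠ 0 ∧ q i ≠ 1/(m:ℝ) := by
    have : i ∈ badSet m q := by rw [hi]; exact Finset.mem_singleton_self i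
    exact (Finset.mem_filter.mp this).2
  have hgood : ∀ k ∈ Finset.univ.erase i, q k = 0 ∨ q k = 1/(m:ℝ) := by
    intro k hk
    have hki : k ≠ i := (Finset.mem_erase.mp hk).1
    by_contra hbad
    push_neg at hbad
    have : k ∈ badSet m q := Finset.mem_filter.mpr ⟨Finset.mem_univ _, hbad⟩
    rw [hi, Finset.mem_singleton] at this
    exact hki this
  have hsum' : q i + ∑ k ∈ Finset.univ.erase i, q k = 1 := by
    rw [Finset.add_sum_erase _ q (Finset.mem_univ i)]
    exact hq1
  rw [sum_good m _ q hgood] at hsum'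
  set cnum := ((Finset.univ.erase i).filter (fun k => q k = 1/(m:ℝ))).card with hc
  have hm0 : (0:ℝ) < m := by exact_mod_cast hm
  have hqi_pos : 0 < q i := lt_of_le_of_ne (hq0 i) (Ne.symm hibad.1)
  have hqi_lt : q i < 1/(m:ℝ) := lt_of_le_of_ne (hqm i) hibad.2
  -- q i = 1 - cnum/m
  have hinv : (m:ℝ) * (1/(m:ℝ)) = 1 := by field_simp
  have hpos : 0 < 1/(m:ℝ) := by positivity
  have h1 : (cnum:ℝ) < m := by
    by_contra hge
    push_neg at hge
    nlinarith [hinv, hpos, hge]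
  have h2 : (m:ℝ) ≤ cnum := by
    by_contra hlt
    push_neg at hlt
    have hcm : (cnum:ℝ) + 1 ≤ m := by exact_mod_cast Nat.succ_le_of_lt (by exact_mod_cast hlt)
    nlinarith [hinv, hpos, hcm]
  linarith

lemma main_ind (N M m : ℕ) (hm : 0 < m) (hmd : m ≤ d)
    (qstar : Fin d → ℝ) (hqstar : ∀ i, qstar i = if (i:ℕ) < m then 1/(m:ℝ) else 0) :
    ∀ (n : ℕ) (q : Fin d → ℝ), (∀ i, 0 ≤ q i) → (∑ i, q i = 1) → (∀ i, q i ≤ 1/(m:ℝ)) →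
    (badSet m q).card ≤ n → S N M q ≤ S N M qstar := by
  classical
  intro n
  induction n with
  | zero =>
    intro q hq0 hq1 hqm hcard
    have hempty : badSet m q = ∅ := Finset.card_eq_zero.mp (Nat.le_zero.mp hcard)
    have hgood : ∀ i, q i = 0 ∨ q i = 1/(m:ℝ) := by
      intro i
      by_contra hbad
      push_neg at hbad
      have : i ∈ badSet m q := Finset.mem_filter.mpr ⟨Finset.mem_univ _, hbad⟩
      rw [hempty] at this
      exact absurd this (Finset.notMem_empty i)
    exact le_of_eq (base_case N M m hm hmd q hgood hq1 qstar hqstar)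
  | succ n ih =>
    intro q hq0 hq1 hqm hcard
    rcases Nat.lt_or_ge (badSet m q).card (n+1) with hlt | hge
    · exact ih q hq0 hq1 hqm (Nat.lt_succ_iff.mp hlt)
    have heq : (badSet m q).card = n + 1 := le_antisymm hcard hge
    have h2le : 2 ≤ (badSet m q).card := by
      rcases Nat.lt_or_ge (badSet m q).card 2 with h | h
      · interval_cases hb : (badSet m q).card
        · omega
        · exact absurd hb (bad_card_ne_one m hm q hq0 hq1 hqm)
      · exact h
    obtain ⟨i0, hi0, j0, hj0, hij⟩ := Finset.one_lt_card.mp h2le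
    have hi0' := (Finset.mem_filter.mp hi0).2
    have hj0' := (Finset.mem_filter.mp hj0).2
    -- the transfer direction
    set v : Fin d → ℝ := fun k => if k = i0 then 1 else if k = j0 then -1 else 0 with hv
    -- endpoint analysis helper
    have endpoint : ∀ (i1 j1 : Fin d), i1 ≠ j1 →
        (q i1 ≠ 0 ∧ q i1 ≠ 1/(m:ℝ)) → (q j1 ≠ 0 ∧ q j1 ≠ 1/(m:ℝ)) →
        ∀ (w : Fin d → ℝ), (∀ k, w k = if k = i1 then 1 else if k = j1 then -1 else 0) →
        ∀ (t : ℝ), t = min (1/(m:ℝ) - q i1) (q j1) →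
        (∀ i, 0 ≤ q i + t * w i) ∧ (∑ i, (q i + t * w i) = 1) ∧
        (∀ i, q i + t * w i ≤ 1/(m:ℝ)) ∧
        (badSet m (fun k => q k + t * w k)).card ≤ n := by
      intro i1 j1 hij1 hi1 hj1 w hw t ht
      have hpos : (0:ℝ) < 1/(m:ℝ) := by positivity
      have ht1 : 0 ≤ 1/(m:ℝ) - q i1 := by linarith [hqm i1]
      have ht0 : 0 ≤ t := ht ▸ le_min ht1 (hq0 j1)
      have htle1 : t ≤ 1/(m:ℝ) - q i1 := ht ▸ min_le_left _ _
      have htle2 : t ≤ q j1 := ht ▸ min_le_right _ _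
      have hQ : ∀ k, q k + t * w k =
          if k = i1 then q i1 + t else if k = j1 then q j1 - t else q k := by
        intro k
        rw [hw k]
        by_cases h1 : k = i1
        · subst h1; simp
        · by_cases h2 : k = j1
          · subst h2; simp [h1]; ring
          · simp [h1, h2]
      have hnn : ∀ i, 0 ≤ q i + t * w i := by
        intro k
        rw [hQ k]
        split_ifs with h1 h2
        · linarith [hq0 i1]
        · linarith
        · exact hq0 k
      have hub : ∀ i, q i + t * w i ≤ 1/(m:ℝ) := by
        intro k
        rw [hQ k]
        split_ifs with h1 h2
        · linarith
        · linarith [hqm j1]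
        · exact hqm k
      have hwsum : ∑ k, w k = 0 := by
        have hsplit : ∀ k, w k = (if k = i1 then (1:ℝ) else 0) + (if k = j1 then (-1:ℝ) else 0) := by
          intro k
          rw [hw k]
          by_cases h1 : k = i1
          · subst h1; simp [hij1]
          · by_cases h2 : k = j1
            · subst h2; simp [h1]
            · simp [h1, h2]
        rw [Finset.sum_congr rfl (fun k _ => hsplit k), Finset.sum_add_distrib,
          Finset.sum_ite_eq' Finset.univ i1 (fun _ => (1:ℝ)),
          Finset.sum_ite_eq' Finset.univ j1 (fun _ => (-1:ℝ))]
        simp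
      have hsum : ∑ i, (q i + t * w i) = 1 := by
        rw [Finset.sum_add_distrib, ← Finset.mul_sum, hwsum, mul_zero, add_zero, hq1]
      refine ⟨hnn, hsum, hub, ?_⟩
      -- bad set decreases
      have hi1mem : i1 ∈ badSet m q := Finset.mem_filter.mpr ⟨Finset.mem_univ _, hi1⟩
      have hj1mem : j1 ∈ badSet m q := Finset.mem_filter.mpr ⟨Finset.mem_univ _, hj1⟩
      have hsub : badSet m (fun k => q k + t * w k) ⊆ badSet m q := by
        intro k hk
        rcases eq_or_ne k i1 with rfl | h1
        · exact hi1mem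
        · rcases eq_or_ne k j1 with rfl | h2
          · exact hj1mem
          · have hk' := (Finset.mem_filter.mp hk).2
            simp only [hQ, h1, h2, if_false] at hk'
            exact Finset.mem_filter.mpr ⟨Finset.mem_univ _, hk'⟩
      have hrem : ∃ g ∈ badSet m q, g ∉ badSet m (fun k => q k + t * w k) := by
        rcases min_cases (1/(m:ℝ) - q i1) (q j1) with ⟨he, -⟩ | ⟨he, -⟩
        · refine ⟨i1, hi1mem, ?_⟩
          intro hmem
          refine (Finset.mem_filter.mp hmem).2.2 ?_
          show q i1 + t * w i1 = 1/(m:ℝ)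
          rw [hQ i1, if_pos rfl, ht, he]
          ring
        · refine ⟨j1, hj1mem, ?_⟩
          intro hmem
          refine (Finset.mem_filter.mp hmem).2.1 ?_
          show q j1 + t * w j1 = 0
          have hne : j1 ≠ i1 := fun h => hij1 h.symm
          rw [hQ j1, if_neg hne, if_pos rfl, ht, he]
          ring
      have hss : badSet m (fun k => q k + t * w k) ⊂ badSet m q := by
        obtain ⟨g, hg1, hg2⟩ := hrem
        exact Finset.ssubset_iff_of_subset hsub |>.mpr ⟨g, hg1, hg2⟩
      have := Finset.card_lt_card hss
      omega
    -- assemble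
    set w' : Fin d → ℝ := fun k => if k = j0 then 1 else if k = i0 then -1 else 0 with hw'
    set tp := min (1/(m:ℝ) - q i0) (q j0) with htp
    set tm := min (1/(m:ℝ) - q j0) (q i0) with htm
    obtain ⟨hp1, hp2, hp3, hp4⟩ := endpoint i0 j0 hij hi0' hj0' v (fun k => rfl) tp rfl
    obtain ⟨hm1, hm2, hm3, hm4⟩ := endpoint j0 i0 hij.symm hj0' hi0' w' (fun k => rfl) tm rfl
    have hSp : S N M (fun k => q k + tp * v k) ≤ S N M qstar := ih _ hp1 hp2 hp3 hp4
    have hSm : S N M (fun k => q k + tm * w' k) ≤ S N M qstar := ih _ hm1 hm2 hm3 hm4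
    have hvw : ∀ k, q k + (-tm) * v k = q k + tm * w' k := by
      intro k
      have : w' k = - v k := by
        simp only [hv, hw']
        by_cases h1 : k = i0
        · subst h1; simp [hij]
        · by_cases h2 : k = j0
          · subst h2; simp [h1]
          · simp [h1, h2]
      rw [this]; ring
    have htp0 : 0 ≤ tp := le_min (by linarith [hqm i0]) (hq0 j0)
    have htm0 : 0 ≤ tm := le_min (by linarith [hqm j0]) (hq0 i0)
    have hconv := S_convexOn N M q v
    have hseg : (0:ℝ) ∈ segment ℝ (-tm) tp := by
      rw [segment_eq_Icc (by linarith)]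
      exact ⟨by linarith, by linarith⟩
    have hmax := hconv.le_on_segment (Set.mem_univ (-tm)) (Set.mem_univ tp) hseg
    have hg0 : S N M (fun k => q k + (0:ℝ) * v k) = S N M q := by
      congr 1
      funext k
      ring
    have hgm : S N M (fun k => q k + (-tm) * v k) = S N M (fun k => q k + tm * w' k) := by
      congr 1
      funext k
      exact hvw k
    rw [hg0, hgm] at hmax
    calc S N M q ≤ max (S N M (fun k => q k + tm * w' k)) (S N M (fun k => q k + tp * v k)) := hmax
      _ ≤ S N M qstar := max_le hSm hSp

end LamAux

/-- `λ(q)` for a `d`-dimensional probability vector `q`: the expected number of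
meetings (at positive times) of two independent oriented random walks associated to `q`,
given by the explicit formula
`λ(q) = ∑_{n ≥ 1} ∑_{l₁+⋯+l_d = n} ( (n!/(l₁!⋯l_d!)) · q₁^{l₁}⋯q_d^{l_d} )²`. -/
noncomputable def lambdaRW (d : ℕ) (q : Fin d → ℝ) : ENNReal :=
  ∑' n : ℕ, ∑ l ∈ Finset.Nat.antidiagonalTuple d (n + 1),
    ENNReal.ofReal (((Nat.multinomial Finset.univ l : ℝ) * ∏ i, q i ^ l i) ^ 2)


theorem lambda_le_lambda_packed
    (d m : ℕ) (hd : 4 ≤ d) (hm : 4 ≤ m) (hmd : m ≤ d)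
    (q : Fin d → ℝ) (hq : ∀ i, 0 ≤ q i) (hq1 : ∑ i, q i = 1)
    (hqmax : ∀ i, q i ≤ 1 / (m : ℝ))
    (qstar : Fin d → ℝ) (hqstar : ∀ i, qstar i = if (i : ℕ) < m then 1 / (m : ℝ) else 0) :
    lambdaRW d q ≤ lambdaRW d qstar := by
  rw [lambdaRW, lambdaRW]
  refine ENNReal.tsum_le_tsum fun n => ?_
  have hm1 : 0 < m := by omega
  have hqstar' : ∀ i, qstar i = if (i : ℕ) < m then 1/(m:ℝ) else 0 := by
    intro i; rw [hqstar i]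
  have key : LamAux.F (n+1) q ≤ LamAux.F (n+1) qstar := by
    have hS : LamAux.S (n+1) (n+2) q ≤ LamAux.S (n+1) (n+2) qstar :=
      LamAux.main_ind (n+1) (n+2) m hm1 hmd qstar hqstar' (LamAux.badSet m q).card q
        hq hq1 hqmax le_rfl
    have e1 := LamAux.S_eq (n+1) (n+2) (by omega) q
    have e2 := LamAux.S_eq (n+1) (n+2) (by omega) qstar
    rw [e1, e2] at hS
    have hMd : (0:ℝ) < ((n+2:ℕ):ℝ)^d := by positivity
    exact le_of_mul_le_mul_left hS hMd
  have h1 : ∀ l ∈ Finset.Nat.antidiagonalTuple d (n+1),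
      0 ≤ ((Nat.multinomial Finset.univ l : ℝ) * ∏ i, q i ^ l i) ^ 2 :=
    fun l _ => sq_nonneg _
  have h2 : ∀ l ∈ Finset.Nat.antidiagonalTuple d (n+1),
      0 ≤ ((Nat.multinomial Finset.univ l : ℝ) * ∏ i, qstar i ^ l i) ^ 2 :=
    fun l _ => sq_nonneg _
  rw [← ENNReal.ofReal_sum_of_nonneg h1, ← ENNReal.ofReal_sum_of_nonneg h2]
  exact ENNReal.ofReal_le_ofReal key
end
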